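/- arXiv:2003.05421 — 3 statements merged into one kernel-verified Lean document; each statement's English description precedes it below -/
import Mathlib

section
/- If a sequence (x_n) on the torus T = R/Z exhibits Poissonian pair correlation, i.e. for all s > 0, lim_{N→∞} (1/N) #{1 ≤ m ≠ n ≤ N : ‖x_m - x_n‖ ≤ s/N} = 2s (where ‖·‖ denotes distance to the nearest integer), then (x_n) is equidistributed on T. -/
open Filter
open scoped Classical BigOperators

noncomputable section

/-- distance from a real number to the nearest integer (the torus norm). -/
def tdist (y : ℝ) : ℝ := |y - round y|

/-- number of pairs `1 ≤ m ≠ n ≤ N` with `‖x m - x n‖ ≤ ε`. -/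
def pairCount (x : ℕ → ℝ) (N : ℕ) (ε : ℝ) : ℕ :=
  ((Finset.Icc 1 N ×ˢ Finset.Icc 1 N).filter
    (fun p => p.1 ≠ p.2 ∧ tdist (x p.1 - x p.2) ≤ ε)).card

namespace PPCaux

/-- the cell index of the `n`-th point among `N` cells. -/
def tcell (x : ℕ → ℝ) (N n : ℕ) : ℕ := (⌊Int.fract (x n) * N⌋).toNat

/-- the number of points among the first `N` whose cell lies in the cyclic
window of length `J` starting at `i`. -/
def Wcnt (x : ℕ → ℝ) (N J i : ℕ) : ℕ :=
  ((Finset.Icc 1 N).filter (fun n => (tcell x N n + N - i) % N < J)).card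

/-- total squared deviation of window counts from their mean `J`. -/
def Vsum (x : ℕ → ℝ) (N J : ℕ) : ℝ := ∑ i ∈ Finset.range N, ((Wcnt x N J i : ℝ) - J)^2

lemma Vsum_nonneg (x : ℕ → ℝ) (N J : ℕ) : 0 ≤ Vsum x N J :=
  Finset.sum_nonneg (fun i _ => sq_nonneg _)

lemma tdist_le_abs_sub_int (y : ℝ) (k : ℤ) : tdist y ≤ |y - k| := by
  rcases eq_or_ne k (round y) with rfl | hk
  · exact le_of_eq rfl
  · have h1 : (1 : ℝ) ≤ |(round y : ℝ) - k| := by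
      have : round y - k ≠ 0 := sub_ne_zero.mpr (by exact_mod_cast (Ne.symm hk))
      have := Int.one_le_abs (by exact_mod_cast this)
      exact_mod_cast (by exact_mod_cast this : (1:ℤ) ≤ |round y - k|)
    have h2 : |y - round y| ≤ 1/2 := abs_sub_round y
    have h3 : |(round y : ℝ) - k| ≤ |round y - y| + |y - k| := by
      calc |(round y : ℝ) - k| = |(round y - y) + (y - k)| := by ring_nf
        _ ≤ |round y - y| + |y - k| := abs_add_le _ _
    have h4 : |(round y : ℝ) - y| = |y - round y| := abs_sub_comm _ _
    unfold tdist
    linarith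

lemma tdist_add_int (y : ℝ) (k : ℤ) : tdist (y + k) = tdist y := by
  unfold tdist
  rw [round_add_intCast]
  push_cast
  ring_nf

lemma tcell_lt {x : ℕ → ℝ} {N : ℕ} (hN : 0 < N) (n : ℕ) : tcell x N n < N := by
  have h0 : 0 ≤ Int.fract (x n) := Int.fract_nonneg (x n)
  have h1 : Int.fract (x n) < 1 := Int.fract_lt_one (x n)
  have hfl : ⌊Int.fract (x n) * N⌋ < N := by
    rw [Int.floor_lt]
    push_cast
    have hN' : (0:ℝ) < N := by exact_mod_cast hN
    nlinarith
  unfold tcell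
  omega

lemma tcell_bounds {x : ℕ → ℝ} {N : ℕ} (hN : 0 < N) (n : ℕ) :
    (tcell x N n : ℝ) ≤ Int.fract (x n) * N ∧ Int.fract (x n) * N < tcell x N n + 1 := by
  have h0 : 0 ≤ Int.fract (x n) := Int.fract_nonneg (x n)
  have hNR : (0:ℝ) ≤ (N:ℝ) := by positivity
  have hnn : (0:ℤ) ≤ ⌊Int.fract (x n) * N⌋ := Int.floor_nonneg.mpr (by positivity)
  have hc : ((tcell x N n : ℕ) : ℝ) = ((⌊Int.fract (x n) * N⌋ : ℤ) : ℝ) := by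
    unfold tcell
    exact_mod_cast Int.toNat_of_nonneg hnn
  constructor
  · rw [hc]; exact Int.floor_le _
  · rw [hc]
    have h := Int.lt_floor_add_one (Int.fract (x n) * N)
    push_cast at h ⊢
    linarith

lemma modw {c i N : ℕ} (hc : c < N) (hi : i < N) :
    (c + N - i) % N = if i ≤ c then c - i else c + N - i := by
  split_ifs with h
  · have : c + N - i = (c - i) + N := by omega
    rw [this, Nat.add_mod_right, Nat.mod_eq_of_lt (by omega)]
  · exact Nat.mod_eq_of_lt (by omega)

lemma card_windows {N J c : ℕ} (hJ : J ≤ N) (hc : c < N) :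
    ((Finset.range N).filter (fun i => (c + N - i) % N < J)).card = J := by
  classical
  have hset : ((Finset.range N).filter (fun i => (c + N - i) % N < J))
      = Finset.Icc (c + 1 - J) c ∪ Finset.Ico (c + N + 1 - J) N := by
    ext i
    simp only [Finset.mem_filter, Finset.mem_range, Finset.mem_union, Finset.mem_Icc, Finset.mem_Ico]
    constructor
    · rintro ⟨hiN, hmod⟩
      rw [modw hc hiN] at hmod
      split_ifs at hmod with h <;> omega
    · intro hOr
      have hiN : i < N := by omega
      refine ⟨hiN, ?_⟩
      rw [modw hc hiN]
      split_ifs with h <;> omega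
  rw [hset, Finset.card_union_of_disjoint, Nat.card_Icc, Nat.card_Ico]
  · omega
  · rw [Finset.disjoint_left]
    intro i hi1 hi2
    simp only [Finset.mem_Icc, Finset.mem_Ico] at hi1 hi2
    omega

lemma mod_inj {N c : ℕ} (hc : c < N) {i i' : ℕ} (hi : i < N) (hi' : i' < N)
    (h : (c + N - i) % N = (c + N - i') % N) : i = i' := by
  rw [modw hc hi, modw hc hi'] at h
  split_ifs at h <;> omega

lemma overlap_le {x : ℕ → ℝ} {N J : ℕ} (hN : 2 * J ≤ N) (hJ : 0 < J) (m n : ℕ) :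
    ((Finset.range N).filter
        (fun i => (tcell x N m + N - i) % N < J ∧ (tcell x N n + N - i) % N < J)).card
      ≤ ((Finset.Icc 1 J).filter (fun t : ℕ => tdist (x m - x n) ≤ (t : ℝ) / N)).card := by
  classical
  have hN0 : 0 < N := by omega
  set c := tcell x N m with hcdef
  set c' := tcell x N n with hc'def
  have hc : c < N := tcell_lt hN0 m
  have hc' : c' < N := tcell_lt hN0 n
  set a : ℕ → ℕ := fun i => (c + N - i) % N with hadef
  set b : ℕ → ℕ := fun i => (c' + N - i) % N with hbdef
  set F := (Finset.range N).filter (fun i => a i < J ∧ b i < J) with hF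
  rcases F.eq_empty_or_nonempty with hFe | ⟨i₀, hi₀⟩
  · rw [hFe]; simp
  · have hmem : ∀ i ∈ F, i < N ∧ a i < J ∧ b i < J := by
      intro i hi
      rw [hF, Finset.mem_filter, Finset.mem_range] at hi
      exact ⟨hi.1, hi.2⟩
    have key : ∀ i ∈ F, ∃ k : ℤ, (a i : ℤ) - (b i : ℤ) = (c : ℤ) - c' + k * N := by
      intro i hi
      obtain ⟨hiN, h1, h2⟩ := hmem i hi
      have e1 : a i = if i ≤ c then c - i else c + N - i := modw hc hiN
      have e2 : b i = if i ≤ c' then c' - i else c' + N - i := modw hc' hiN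
      split_ifs at e1 e2 with hA hB hB
      · exact ⟨0, by push_cast [e1, e2]; omega⟩
      · exact ⟨-1, by push_cast [e1, e2]; omega⟩
      · exact ⟨1, by push_cast [e1, e2]; omega⟩
      · exact ⟨0, by push_cast [e1, e2]; omega⟩
    obtain ⟨hi₀N, ha₀, hb₀⟩ := hmem i₀ hi₀
    obtain ⟨k₀, hk₀⟩ := key i₀ hi₀
    set d : ℕ := max (a i₀ - b i₀) (b i₀ - a i₀) with hd
    have hdJ : d < J := by omega
    have hconst : ∀ i ∈ F, (a i : ℤ) - (b i : ℤ) = (a i₀ : ℤ) - (b i₀ : ℤ) := by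
      intro i hi
      obtain ⟨hiN, h1, h2⟩ := hmem i hi
      obtain ⟨k, hk⟩ := key i hi
      have hdiff : (a i : ℤ) - b i - ((a i₀ : ℤ) - b i₀) = (k - k₀) * N := by
        rw [hk, hk₀]; ring
      rcases eq_or_ne k k₀ with rfl | hne
      · have : ((k:ℤ) - k) * N = 0 := by ring
        omega
      · exfalso
        have h1' : |(a i : ℤ) - b i - ((a i₀ : ℤ) - b i₀)| < N := by
          rw [abs_lt]
          constructor <;> [skip; skip] <;>
          · push_cast
            omega
        rw [hdiff, abs_mul, abs_of_nonneg (by positivity : (0:ℤ) ≤ (N:ℤ))] at h1'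
        have hone : (1:ℤ) ≤ |k - k₀| := Int.one_le_abs (sub_ne_zero.mpr hne)
        nlinarith [Int.natCast_nonneg N, h1']
    have hinj : Set.InjOn a F := by
      intro i hi i' hi' hee
      exact mod_inj hc (hmem i hi).1 (hmem i' hi').1 hee
    have hcardF : F.card ≤ J - d := by
      rcases le_or_gt (b i₀) (a i₀) with hcase | hcase
      · have h1 : F.card ≤ (Finset.Ico d J).card := by
          apply Finset.card_le_card_of_injOn a ?_ hinj
          intro i hi
          obtain ⟨hiN, h1, h2⟩ := hmem i hi
          have hcc := hconst i hi
          simp only [Finset.mem_coe, Finset.mem_Ico]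
          omega
        rw [Nat.card_Ico] at h1
        exact h1
      · have h1 : F.card ≤ (Finset.range (J - d)).card := by
          apply Finset.card_le_card_of_injOn a ?_ hinj
          intro i hi
          obtain ⟨hiN, h1, h2⟩ := hmem i hi
          have hcc := hconst i hi
          simp only [Finset.mem_coe, Finset.mem_range]
          omega
        rw [Finset.card_range] at h1
        exact h1
    have htd : tdist (x m - x n) ≤ ((d : ℝ) + 1) / N := by
      have hsplit : x m - x n = (Int.fract (x m) - Int.fract (x n)) + ((⌊x m⌋ - ⌊x n⌋ : ℤ) : ℝ) := by
        rw [Int.fract, Int.fract]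
        push_cast
        ring
      rw [hsplit, tdist_add_int]
      have hb1 := tcell_bounds (x := x) hN0 m
      have hb2 := tcell_bounds (x := x) hN0 n
      have hNR : (0:ℝ) < N := by exact_mod_cast hN0
      refine le_trans (tdist_le_abs_sub_int (Int.fract (x m) - Int.fract (x n)) (-k₀)) ?_
      rw [le_div_iff₀ hNR]
      · have habs : |Int.fract (x m) - Int.fract (x n) - ((-k₀ : ℤ) : ℝ)| * N ≤ (d : ℝ) + 1 := by
          rw [← abs_of_nonneg (le_of_lt hNR), ← abs_mul]
          have hexp : (Int.fract (x m) - Int.fract (x n) - ((-k₀ : ℤ) : ℝ)) * N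
              = (Int.fract (x m) * N - c) - (Int.fract (x n) * N - c') + ((c:ℝ) - c' + k₀ * N) := by
            push_cast; ring
          have hdelta : ((c:ℝ) - c' + k₀ * N) = (a i₀ : ℝ) - b i₀ := by
            exact_mod_cast congrArg (fun z : ℤ => (z : ℝ)) hk₀.symm
          rw [hexp, hdelta]
          have hd1 : ((a i₀:ℝ)) - b i₀ ≤ d := by
            have : (a i₀ : ℤ) - b i₀ ≤ (d:ℤ) := by omega
            exact_mod_cast this
          have hd2 : -((d:ℝ)) ≤ (a i₀:ℝ) - b i₀ := by
            have : -(d : ℤ) ≤ (a i₀ : ℤ) - b i₀ := by omega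
            exact_mod_cast this
          rw [abs_le]
          constructor <;> nlinarith [hb1.1, hb1.2, hb2.1, hb2.2]
        exact habs
    have hNR : (0:ℝ) < N := by exact_mod_cast hN0
    have hsub : Finset.Icc (d + 1) J ⊆ (Finset.Icc 1 J).filter
        (fun t : ℕ => tdist (x m - x n) ≤ (t : ℝ) / N) := by
      intro t ht
      rw [Finset.mem_Icc] at ht
      rw [Finset.mem_filter, Finset.mem_Icc]
      refine ⟨⟨by omega, ht.2⟩, le_trans htd ?_⟩
      gcongr
      have : (d + 1 : ℕ) ≤ t := by omega
      exact_mod_cast this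
    have hcc : J - d = (Finset.Icc (d+1) J).card := by rw [Nat.card_Icc]; omega
    calc F.card ≤ J - d := hcardF
      _ = _ := hcc
      _ ≤ _ := Finset.card_le_card hsub

lemma sum_W {x : ℕ → ℝ} {N J : ℕ} (hN : 0 < N) (hJ : J ≤ N) :
    ∑ i ∈ Finset.range N, Wcnt x N J i = J * N := by
  classical
  unfold Wcnt
  have : ∀ i ∈ Finset.range N, ((Finset.Icc 1 N).filter (fun n => (tcell x N n + N - i) % N < J)).card
      = ∑ n ∈ Finset.Icc 1 N, if (tcell x N n + N - i) % N < J then 1 else 0 := by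
    intro i _
    rw [Finset.card_filter]
  rw [Finset.sum_congr rfl this, Finset.sum_comm]
  have : ∀ n ∈ Finset.Icc 1 N, (∑ i ∈ Finset.range N, if (tcell x N n + N - i) % N < J then 1 else 0) = J := by
    intro n _
    rw [← Finset.card_filter]
    exact card_windows hJ (tcell_lt hN n)
  rw [Finset.sum_congr rfl this, Finset.sum_const, Nat.card_Icc]
  simp [Nat.mul_comm]

lemma sum_W_sq {x : ℕ → ℝ} {N J : ℕ} (hN : 2 * J ≤ N) (hJ : 0 < J) :
    ∑ i ∈ Finset.range N, (Wcnt x N J i)^2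
      ≤ J * N + ∑ t ∈ Finset.Icc 1 J, pairCount x N ((t : ℝ) / N) := by
  classical
  have hN0 : 0 < N := by omega
  set S := Finset.Icc 1 N with hS
  have hcardS : S.card = N := by rw [hS, Nat.card_Icc]; omega
  set T := S ×ˢ S with hT
  -- step 1 : squares as product counts
  have step1 : ∀ i, (Wcnt x N J i)^2
      = (T.filter (fun p => (tcell x N p.1 + N - i) % N < J ∧ (tcell x N p.2 + N - i) % N < J)).card := by
    intro i
    rw [sq]
    unfold Wcnt
    rw [hT, Finset.filter_product (fun c => (tcell x N c + N - i) % N < J)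
      (fun c => (tcell x N c + N - i) % N < J), Finset.card_product]
  -- step 2 : swap sums
  have step2 : ∑ i ∈ Finset.range N, (Wcnt x N J i)^2
      = ∑ p ∈ T, ((Finset.range N).filter
          (fun i => (tcell x N p.1 + N - i) % N < J ∧ (tcell x N p.2 + N - i) % N < J)).card := by
    have e1 : ∀ i ∈ Finset.range N, (Wcnt x N J i)^2
        = ∑ p ∈ T, if (tcell x N p.1 + N - i) % N < J ∧ (tcell x N p.2 + N - i) % N < J then 1 else 0 := by
      intro i _
      rw [step1 i, Finset.card_filter]
    rw [Finset.sum_congr rfl e1, Finset.sum_comm]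
    exact Finset.sum_congr rfl (fun p _ => (Finset.card_filter _ _).symm)
  rw [step2]
  -- step 3 : split diagonal
  rw [← Finset.sum_filter_add_sum_filter_not T (fun p => p.1 = p.2)]
  have diag : ∑ p ∈ T.filter (fun p => p.1 = p.2),
      ((Finset.range N).filter
        (fun i => (tcell x N p.1 + N - i) % N < J ∧ (tcell x N p.2 + N - i) % N < J)).card ≤ J * N := by
    have hb : ∀ p ∈ T.filter (fun p => p.1 = p.2),
        ((Finset.range N).filter
          (fun i => (tcell x N p.1 + N - i) % N < J ∧ (tcell x N p.2 + N - i) % N < J)).card ≤ J := by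
      intro p _
      calc _ ≤ ((Finset.range N).filter (fun i => (tcell x N p.1 + N - i) % N < J)).card :=
            Finset.card_le_card (Finset.monotone_filter_right _ (fun i _ hi => hi.1))
        _ = J := card_windows (by omega) (tcell_lt hN0 p.1)
    calc ∑ p ∈ T.filter (fun p => p.1 = p.2), _ ≤ ∑ p ∈ T.filter (fun p => p.1 = p.2), J :=
          Finset.sum_le_sum hb
      _ = (T.filter (fun p => p.1 = p.2)).card * J := by rw [Finset.sum_const, smul_eq_mul]
      _ ≤ N * J := by
          have : (T.filter (fun p => p.1 = p.2)).card ≤ S.card := by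
            apply Finset.card_le_card_of_injOn (fun p => p.1)
            · intro p hp
              rw [Finset.mem_coe, Finset.mem_filter, hT, Finset.mem_product] at hp
              exact hp.1.1
            · intro p hp q hq hpq
              rw [Finset.mem_coe, Finset.mem_filter] at hp hq
              have := hp.2; have := hq.2
              ext
              · exact hpq
              · simp only at hpq ⊢
                omega
          rw [hcardS] at this
          exact Nat.mul_le_mul_right J this
      _ = J * N := Nat.mul_comm N J
  have offdiag : ∑ p ∈ T.filter (fun p => ¬ p.1 = p.2),
      ((Finset.range N).filter
        (fun i => (tcell x N p.1 + N - i) % N < J ∧ (tcell x N p.2 + N - i) % N < J)).card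
      ≤ ∑ t ∈ Finset.Icc 1 J, pairCount x N ((t : ℝ) / N) := by
    have hb : ∀ p ∈ T.filter (fun p => ¬ p.1 = p.2),
        ((Finset.range N).filter
          (fun i => (tcell x N p.1 + N - i) % N < J ∧ (tcell x N p.2 + N - i) % N < J)).card
        ≤ ((Finset.Icc 1 J).filter (fun t : ℕ => tdist (x p.1 - x p.2) ≤ (t : ℝ) / N)).card := by
      intro p _
      exact overlap_le hN hJ p.1 p.2
    refine le_trans (Finset.sum_le_sum hb) ?_
    have swap : ∑ p ∈ T.filter (fun p => ¬ p.1 = p.2),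
        ((Finset.Icc 1 J).filter (fun t : ℕ => tdist (x p.1 - x p.2) ≤ (t : ℝ) / N)).card
        = ∑ t ∈ Finset.Icc 1 J,
          ((T.filter (fun p => ¬ p.1 = p.2)).filter
            (fun p => tdist (x p.1 - x p.2) ≤ (t : ℝ) / N)).card := by
      have e1 : ∀ p ∈ T.filter (fun p => ¬ p.1 = p.2),
          ((Finset.Icc 1 J).filter (fun t : ℕ => tdist (x p.1 - x p.2) ≤ (t : ℝ) / N)).card
          = ∑ t ∈ Finset.Icc 1 J, if tdist (x p.1 - x p.2) ≤ (t : ℝ) / N then 1 else 0 := by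
        intro p _
        rw [Finset.card_filter]
      rw [Finset.sum_congr rfl e1, Finset.sum_comm]
      exact Finset.sum_congr rfl (fun t _ => (Finset.card_filter _ _).symm)
    rw [swap]
    apply Finset.sum_le_sum
    intro t _
    apply le_of_eq
    unfold pairCount
    rw [Finset.filter_filter]
  omega

lemma Wcnt_nonwrap {x : ℕ → ℝ} {N J i : ℕ} (hN : 0 < N) (hJ : 0 < J) (hiJ : i + J ≤ N) :
    Wcnt x N J i
      = ((Finset.Icc 1 N).filter (fun n => i ≤ tcell x N n ∧ tcell x N n < i + J)).card := by
  unfold Wcnt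
  congr 1
  apply Finset.filter_congr
  intro n _
  have hc : tcell x N n < N := tcell_lt hN n
  have hi : i < N := by omega
  have hmw := modw hc hi
  constructor
  · intro h
    rw [hmw] at h
    split_ifs at h with hcase
    · omega
    · omega
  · intro h
    rw [hmw]
    split_ifs with hcase
    · omega
    · omega

lemma cell_count_lower {x : ℕ → ℝ} {N J lo hi : ℕ} (hN2J : 2*J ≤ N) (hJ : 0 < J)
    (hhi : hi ≤ N) :
    ((hi - lo : ℕ) : ℝ) - 2*J - Real.sqrt (((N:ℝ)/J) * (Vsum x N J / J))
      ≤ (((Finset.Icc 1 N).filter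
          (fun n => lo ≤ tcell x N n ∧ tcell x N n < hi)).card : ℝ) := by
  classical
  have hN0 : 0 < N := by omega
  set L : ℕ := hi - lo with hL
  set M : ℕ := L / J - 1 with hM
  set t : ℕ := L / J * J with ht
  have ht1 : t ≤ L := Nat.div_mul_le_self L J
  have ht2 : L < t + J := by
    have h1 : t + L % J = L := by rw [ht, Nat.mul_comm]; exact Nat.div_add_mod L J
    have h2 := Nat.mod_lt L hJ
    omega
  have hMJ : M * J = t - J := by
    rw [hM, Nat.sub_mul, one_mul, ht]
  -- positions fit
  have hfit : ∀ p < J, ∀ k < M, lo + p + k * J + J ≤ hi := by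
    intro p hp k hk
    have h1 : k * J + J ≤ M * J := by
      have h2 : k + 1 ≤ M := hk
      calc k * J + J = (k+1) * J := by ring
        _ ≤ M * J := Nat.mul_le_mul_right J h2
    omega
  set g : ℕ → ℝ := fun i => ((Wcnt x N J i : ℝ) - J)^2 with hg
  have hgnn : ∀ i, 0 ≤ g i := fun i => sq_nonneg _
  -- selection of a good phase
  have hsel : ∃ p < J, ∑ k ∈ Finset.range M, g (lo + p + k * J) ≤ Vsum x N J / J := by
    by_contra hcon
    push_neg at hcon
    have hlt : ∀ p ∈ Finset.range J, Vsum x N J / J < ∑ k ∈ Finset.range M, g (lo + p + k * J) := by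
      intro p hp
      exact hcon p (Finset.mem_range.mp hp)
    have hsum : ∑ p ∈ Finset.range J, (Vsum x N J / J)
        < ∑ p ∈ Finset.range J, ∑ k ∈ Finset.range M, g (lo + p + k * J) :=
      Finset.sum_lt_sum_of_nonempty (Finset.nonempty_range_iff.mpr (by omega)) hlt
    have hJne : (J:ℝ) ≠ 0 := Nat.cast_ne_zero.mpr (by omega)
    have hL1 : ∑ p ∈ Finset.range J, (Vsum x N J / J) = Vsum x N J := by
      rw [Finset.sum_const, Finset.card_range, nsmul_eq_mul, mul_comm,
        div_mul_cancel₀ _ hJne]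
    have hinj : Set.InjOn (fun q : ℕ × ℕ => lo + q.1 + q.2 * J)
        ((Finset.range J ×ˢ Finset.range M) : Finset (ℕ × ℕ)) := by
      intro q hq q' hq' he
      simp only [Finset.coe_product, Set.mem_prod, Finset.mem_coe, Finset.mem_range] at hq hq'
      simp only at he
      have e1 : q.1 + q.2 * J = q'.1 + q'.2 * J := by omega
      have e2 : q.2 = q'.2 := by
        have f1 : (q.1 + q.2 * J) / J = q.2 := by
          rw [Nat.add_mul_div_right _ _ hJ, Nat.div_eq_of_lt hq.1]; omega
        have f2 : (q'.1 + q'.2 * J) / J = q'.2 := by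
          rw [Nat.add_mul_div_right _ _ hJ, Nat.div_eq_of_lt hq'.1]; omega
        rw [← f1, ← f2, e1]
      have : q.1 = q'.1 := by
        rw [e2] at e1; omega
      exact Prod.ext this e2
    have hUB : ∑ p ∈ Finset.range J, ∑ k ∈ Finset.range M, g (lo + p + k * J)
        ≤ Vsum x N J := by
      rw [← Finset.sum_product']
      rw [show (∑ q ∈ Finset.range J ×ˢ Finset.range M, g (lo + q.1 + q.2 * J))
          = ∑ i ∈ (Finset.range J ×ˢ Finset.range M).image (fun q : ℕ × ℕ => lo + q.1 + q.2 * J), g i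
          from (Finset.sum_image (fun q hq q' hq' he => hinj hq hq' he)).symm]
      apply Finset.sum_le_sum_of_subset_of_nonneg
      · intro i hi
        rw [Finset.mem_image] at hi
        obtain ⟨q, hq, rfl⟩ := hi
        rw [Finset.mem_product, Finset.mem_range, Finset.mem_range] at hq
        rw [Finset.mem_range]
        have := hfit q.1 hq.1 q.2 hq.2
        omega
      · intro i _ _
        exact hgnn i
    linarith
  obtain ⟨p, hp, hps⟩ := hsel
  -- the disjoint windows
  set pos : ℕ → ℕ := fun k => lo + p + k * J with hposdef
  have hpos : ∀ k, pos k = lo + p + k * J := fun k => rfl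
  have hposJ : ∀ k < M, pos k + J ≤ hi := fun k hk => hfit p hp k hk
  -- count: sum of windows ≤ the interval count
  have hcount : ∑ k ∈ Finset.range M, Wcnt x N J (pos k)
      ≤ ((Finset.Icc 1 N).filter (fun n => lo ≤ tcell x N n ∧ tcell x N n < hi)).card := by
    have hW : ∀ k ∈ Finset.range M, Wcnt x N J (pos k)
        = ((Finset.Icc 1 N).filter
            (fun n => pos k ≤ tcell x N n ∧ tcell x N n < pos k + J)).card := by
      intro k hk
      exact Wcnt_nonwrap hN0 hJ (le_trans (hposJ k (Finset.mem_range.mp hk)) hhi)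
    rw [Finset.sum_congr rfl hW]
    rw [← Finset.card_biUnion]
    · apply Finset.card_le_card
      intro n hn
      rw [Finset.mem_biUnion] at hn
      obtain ⟨k, hk, hn⟩ := hn
      rw [Finset.mem_filter] at hn ⊢
      obtain ⟨hn1, hn2⟩ := hn
      rw [hpos k] at hn2
      have hkM := hposJ k (Finset.mem_range.mp hk)
      rw [hpos k] at hkM
      exact ⟨hn1, by omega, by omega⟩
    · intro k hk k' hk' hne
      rw [Function.onFun, Finset.disjoint_left]
      intro n hn hn'
      rw [Finset.mem_filter] at hn hn'
      obtain ⟨-, hn2⟩ := hn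
      obtain ⟨-, hn2'⟩ := hn'
      rw [hpos k] at hn2
      rw [hpos k'] at hn2'
      rcases Nat.lt_or_ge k k' with hlt | hge
      · have hkk : k * J + J ≤ k' * J := by
          calc k * J + J = (k+1) * J := by ring
            _ ≤ k' * J := Nat.mul_le_mul_right J hlt
        omega
      · have hlt : k' < k := by omega
        have hkk : k' * J + J ≤ k * J := by
          calc k' * J + J = (k'+1) * J := by ring
            _ ≤ k * J := Nat.mul_le_mul_right J hlt
        omega
  -- real chain
  have hMJle : M * J ≤ N := by omega
  have hcauchy : ∑ k ∈ Finset.range M, |(Wcnt x N J (pos k) : ℝ) - J|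
      ≤ Real.sqrt (((N:ℝ)/J) * (Vsum x N J / J)) := by
    rw [Real.le_sqrt (Finset.sum_nonneg (fun k _ => abs_nonneg _))
      (mul_nonneg (by positivity) (div_nonneg (Vsum_nonneg x N J) (by positivity)))]
    have h1 : (∑ k ∈ Finset.range M, |(Wcnt x N J (pos k) : ℝ) - J|)^2
        ≤ (Finset.range M).card * ∑ k ∈ Finset.range M, |(Wcnt x N J (pos k) : ℝ) - J|^2 :=
      sq_sum_le_card_mul_sum_sq
    have h2 : ∑ k ∈ Finset.range M, |(Wcnt x N J (pos k) : ℝ) - J|^2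
        = ∑ k ∈ Finset.range M, g (pos k) := by
      apply Finset.sum_congr rfl
      intro k _
      rw [sq_abs]
    have h3 : ((Finset.range M).card : ℝ) ≤ (N:ℝ)/J := by
      rw [Finset.card_range]
      rw [le_div_iff₀ (by exact_mod_cast hJ : (0:ℝ) < J)]
      exact_mod_cast hMJle
    calc (∑ k ∈ Finset.range M, |(Wcnt x N J (pos k) : ℝ) - J|)^2
        ≤ (Finset.range M).card * ∑ k ∈ Finset.range M, g (pos k) := by rw [← h2]; exact h1
      _ ≤ ((N:ℝ)/J) * (Vsum x N J / J) := by
          apply mul_le_mul h3 hps (Finset.sum_nonneg (fun k _ => hgnn _)) (by positivity)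
  have hWlow : (M : ℝ) * J - ∑ k ∈ Finset.range M, |(Wcnt x N J (pos k) : ℝ) - J|
      ≤ ∑ k ∈ Finset.range M, (Wcnt x N J (pos k) : ℝ) := by
    have : ∀ k ∈ Finset.range M, (J:ℝ) - |(Wcnt x N J (pos k) : ℝ) - J|
        ≤ (Wcnt x N J (pos k) : ℝ) := by
      intro k _
      have := abs_sub_abs_le_abs_sub ((Wcnt x N J (pos k) : ℝ)) (J:ℝ)
      have h := neg_abs_le ((Wcnt x N J (pos k) : ℝ) - J)
      linarith
    calc (M : ℝ) * J - ∑ k ∈ Finset.range M, |(Wcnt x N J (pos k) : ℝ) - J|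
        = ∑ k ∈ Finset.range M, ((J:ℝ) - |(Wcnt x N J (pos k) : ℝ) - J|) := by
          rw [Finset.sum_sub_distrib, Finset.sum_const, Finset.card_range, nsmul_eq_mul]
      _ ≤ _ := Finset.sum_le_sum this
  have hLMJ : (L : ℝ) - 2*J ≤ (M:ℝ) * J := by
    have : L ≤ M * J + 2 * J := by omega
    have h := (Nat.cast_le (α := ℝ)).mpr this
    push_cast at h
    linarith
  have hcast : (∑ k ∈ Finset.range M, Wcnt x N J (pos k) : ℝ)
      = ∑ k ∈ Finset.range M, (Wcnt x N J (pos k) : ℝ) := by push_cast; rfl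
  have hfin : (∑ k ∈ Finset.range M, Wcnt x N J (pos k) : ℝ)
      ≤ (((Finset.Icc 1 N).filter (fun n => lo ≤ tcell x N n ∧ tcell x N n < hi)).card : ℝ) := by
    exact_mod_cast hcount
  linarith [hcauchy, hWlow, hLMJ, hfin, hcast.ge, hcast.le]

lemma gauss (J : ℕ) : ∑ t ∈ Finset.Icc 1 J, 2 * t = J * (J + 1) := by
  induction J with
  | zero => simp
  | succ J ih =>
      rw [Finset.sum_Icc_succ_top (by omega), ih]
      ring

lemma Vsum_le {x : ℕ → ℝ} {N J : ℕ} (hN : 2 * J ≤ N) (hJ : 0 < J)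
    (hP : ((∑ t ∈ Finset.Icc 1 J, pairCount x N ((t : ℝ) / N) : ℕ) : ℝ)
      ≤ ((J * (J+1) + 1 : ℕ) : ℝ) * N) :
    Vsum x N J ≤ (2 * J + 1 : ℝ) * N := by
  have hN0 : 0 < N := by omega
  have e1 : Vsum x N J
      = ∑ i ∈ Finset.range N, ((Wcnt x N J i : ℝ)^2 - 2*J*(Wcnt x N J i : ℝ) + (J:ℝ)^2) := by
    unfold Vsum
    apply Finset.sum_congr rfl
    intro i _
    ring
  have e2 : Vsum x N J = (∑ i ∈ Finset.range N, (Wcnt x N J i : ℝ)^2)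
      - 2*J*(∑ i ∈ Finset.range N, (Wcnt x N J i : ℝ)) + N*(J:ℝ)^2 := by
    rw [e1, Finset.sum_add_distrib, Finset.sum_sub_distrib, Finset.sum_const,
      Finset.card_range, ← Finset.mul_sum, nsmul_eq_mul]
  have e3 : (∑ i ∈ Finset.range N, (Wcnt x N J i : ℝ)) = (J:ℝ) * N := by
    have := sum_W (x := x) hN0 (by omega : J ≤ N)
    calc (∑ i ∈ Finset.range N, (Wcnt x N J i : ℝ))
        = ((∑ i ∈ Finset.range N, Wcnt x N J i : ℕ) : ℝ) := by push_cast; rfl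
      _ = (J:ℝ) * N := by rw [this]; push_cast; ring
  have e4 : (∑ i ∈ Finset.range N, (Wcnt x N J i : ℝ)^2)
      ≤ (J:ℝ)*N + ((∑ t ∈ Finset.Icc 1 J, pairCount x N ((t : ℝ) / N) : ℕ) : ℝ) := by
    have h := sum_W_sq (x := x) hN hJ
    have hc : (∑ i ∈ Finset.range N, (Wcnt x N J i : ℝ)^2)
        = ((∑ i ∈ Finset.range N, (Wcnt x N J i)^2 : ℕ) : ℝ) := by push_cast; rfl
    rw [hc]
    have := (Nat.cast_le (α := ℝ)).mpr h
    push_cast at this ⊢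
    linarith
  have hP' : ((∑ t ∈ Finset.Icc 1 J, pairCount x N ((t : ℝ) / N) : ℕ) : ℝ)
      ≤ ((J:ℝ) * (J+1) + 1) * N := by
    refine le_trans hP (le_of_eq ?_)
    push_cast
    ring
  rw [e2, e3]
  have hJR : (0:ℝ) < J := by exact_mod_cast hJ
  nlinarith [e4, hP']

set_option maxHeartbeats 1600000 in
lemma cnt_lower (x : ℕ → ℝ)
    (h : ∀ s : ℝ, 0 < s →
      Tendsto (fun N : ℕ => (pairCount x N (s / N) : ℝ) / N) atTop (nhds (2 * s)))
    (a b : ℝ) (ha : 0 ≤ a) (hab : a ≤ b) (hb : b ≤ 1) (ε : ℝ) (hε : 0 < ε) :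
    ∀ᶠ N : ℕ in atTop, (b - a - ε) * N
      ≤ (((Finset.Icc 1 N).filter
          (fun n => a ≤ Int.fract (x n) ∧ Int.fract (x n) < b)).card : ℝ) := by
  classical
  -- choose J
  obtain ⟨J, hJ1, hJbig⟩ : ∃ J : ℕ, 0 < J ∧ 12 / ε^2 ≤ (J:ℝ) := by
    obtain ⟨J, hJ⟩ := exists_nat_ge (12 / ε^2)
    exact ⟨J + 1, Nat.succ_pos J, by push_cast; linarith⟩
  -- limit of the pair-count sums
  have htend : Tendsto (fun N : ℕ => ∑ t ∈ Finset.Icc 1 J, (pairCount x N ((t:ℝ) / N) : ℝ) / N)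
      atTop (nhds (∑ t ∈ Finset.Icc 1 J, 2 * (t:ℝ))) := by
    apply tendsto_finset_sum
    intro t ht
    rw [Finset.mem_Icc] at ht
    exact h (t : ℝ) (by exact_mod_cast ht.1)
  have hgauss : (∑ t ∈ Finset.Icc 1 J, 2 * (t:ℝ)) = ((J * (J+1) : ℕ) : ℝ) := by
    have := gauss J
    calc (∑ t ∈ Finset.Icc 1 J, 2 * (t:ℝ)) = ((∑ t ∈ Finset.Icc 1 J, 2 * t : ℕ) : ℝ) := by
          push_cast; rfl
      _ = _ := by rw [this]
  have hev2 : ∀ᶠ N : ℕ in atTop,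
      (∑ t ∈ Finset.Icc 1 J, (pairCount x N ((t:ℝ) / N) : ℝ) / N)
        < ((J * (J+1) + 1 : ℕ) : ℝ) := by
    apply htend.eventually_lt_const
    rw [hgauss]
    push_cast
    linarith
  have hev3 : ∀ᶠ N : ℕ in atTop, (2:ℝ) + 2*J ≤ (ε/2) * N := by
    have : Tendsto (fun N : ℕ => (N:ℝ)) atTop atTop := tendsto_natCast_atTop_atTop
    have h2 : Tendsto (fun N : ℕ => (ε/2) * N) atTop atTop :=
      (tendsto_const_mul_atTop_of_pos (by linarith)).mpr this
    exact h2.eventually_ge_atTop _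
  filter_upwards [hev2, hev3, eventually_ge_atTop (2*J), eventually_ge_atTop 1]
    with N hN2 hN3 hN2J hN1
  have hN0 : 0 < N := by omega
  have hNR : (0:ℝ) < N := by exact_mod_cast hN0
  have hJR : (0:ℝ) < J := by exact_mod_cast hJ1
  -- P bound
  have hP : ((∑ t ∈ Finset.Icc 1 J, pairCount x N ((t : ℝ) / N) : ℕ) : ℝ)
      ≤ ((J * (J+1) + 1 : ℕ) : ℝ) * N := by
    have hsum : (∑ t ∈ Finset.Icc 1 J, (pairCount x N ((t:ℝ) / N) : ℝ) / N)
        = ((∑ t ∈ Finset.Icc 1 J, pairCount x N ((t : ℝ) / N) : ℕ) : ℝ) / N := by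
      rw [← Finset.sum_div]
      push_cast
      rfl
    rw [hsum] at hN2
    rw [div_lt_iff₀ hNR] at hN2
    exact le_of_lt hN2
  have hV : Vsum x N J ≤ (2 * J + 1 : ℝ) * N := Vsum_le hN2J hJ1 hP
  -- the cell interval
  set lo : ℕ := (⌈a * N⌉).toNat with hlo
  set hi : ℕ := (⌊b * N⌋).toNat with hhi
  have hb0 : 0 ≤ b := le_trans ha hab
  have haN : 0 ≤ a * N := by positivity
  have hbN : 0 ≤ b * N := by positivity
  have hceil : ((lo:ℕ):ℝ) = ((⌈a*N⌉ : ℤ) : ℝ) := by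
    rw [hlo]; exact_mod_cast Int.toNat_of_nonneg (Int.ceil_nonneg haN)
  have hfloor : ((hi:ℕ):ℝ) = ((⌊b*N⌋ : ℤ) : ℝ) := by
    rw [hhi]; exact_mod_cast Int.toNat_of_nonneg (Int.floor_nonneg.mpr hbN)
  have hloR : a * N ≤ (lo:ℝ) := by rw [hceil]; exact Int.le_ceil _
  have hlo2 : (lo:ℝ) < a * N + 1 := by rw [hceil]; exact Int.ceil_lt_add_one _
  have hhiR : (hi:ℝ) ≤ b * N := by rw [hfloor]; exact Int.floor_le _
  have hhi2 : b * N - 1 < (hi:ℝ) := by rw [hfloor]; exact Int.sub_one_lt_floor _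
  have hhiN : hi ≤ N := by
    have h1 : (hi:ℝ) ≤ (N:ℝ) := le_trans hhiR (by nlinarith)
    exact_mod_cast h1
  -- the cell filter is inside the fract filter
  have hsubset : (((Finset.Icc 1 N).filter
        (fun n => lo ≤ tcell x N n ∧ tcell x N n < hi)).card : ℝ)
      ≤ (((Finset.Icc 1 N).filter
        (fun n => a ≤ Int.fract (x n) ∧ Int.fract (x n) < b)).card : ℝ) := by
    have : ((Finset.Icc 1 N).filter (fun n => lo ≤ tcell x N n ∧ tcell x N n < hi))
        ⊆ ((Finset.Icc 1 N).filter (fun n => a ≤ Int.fract (x n) ∧ Int.fract (x n) < b)) := by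
      apply Finset.monotone_filter_right
      intro n _ hn
      obtain ⟨h1, h2⟩ := hn
      obtain ⟨hb1, hb2⟩ := tcell_bounds (x := x) hN0 n
      have hcl : (lo:ℝ) ≤ (tcell x N n : ℝ) := by exact_mod_cast h1
      have hch : (tcell x N n : ℝ) + 1 ≤ (hi:ℝ) := by
        have : tcell x N n + 1 ≤ hi := h2
        exact_mod_cast this
      constructor
      · have : a * N ≤ Int.fract (x n) * N := by linarith
        exact le_of_mul_le_mul_right (by linarith) hNR
      · have : Int.fract (x n) * N < b * N := by linarith
        exact lt_of_mul_lt_mul_right (by linarith) (le_of_lt hNR)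
    exact_mod_cast Finset.card_le_card this
  -- main chain
  have hmain := cell_count_lower (x := x) (lo := lo) (hi := hi) hN2J hJ1 hhiN
  -- bound the sqrt term
  have hsqrt : Real.sqrt (((N:ℝ)/J) * (Vsum x N J / J)) ≤ (ε/2) * N := by
    have harg : ((N:ℝ)/J) * (Vsum x N J / J) ≤ ((ε/2) * N)^2 := by
      have hVJ : Vsum x N J / J ≤ 3 * N := by
        rw [div_le_iff₀ hJR]
        have hJ1R : (1:ℝ) ≤ J := by exact_mod_cast hJ1
        nlinarith [hV]
      have h1 : ((N:ℝ)/J) * (Vsum x N J / J) ≤ ((N:ℝ)/J) * (3 * N) :=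
        mul_le_mul_of_nonneg_left hVJ (by positivity)
      have h2 : ((N:ℝ)/J) * (3 * N) = (3 / J) * N^2 := by ring
      have h3 : (3:ℝ) / J ≤ ε^2 / 4 := by
        rw [div_le_iff₀ hJR]
        have : 12 / ε^2 * (ε^2 / 4) ≤ (J:ℝ) * (ε^2/4) :=
          mul_le_mul_of_nonneg_right hJbig (by positivity)
        have he : 12 / ε^2 * (ε^2 / 4) = 3 := by field_simp; ring
        linarith [he ▸ this]
      calc ((N:ℝ)/J) * (Vsum x N J / J) ≤ (3 / J) * N^2 := by rw [← h2]; exact h1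
        _ ≤ (ε^2/4) * N^2 := mul_le_mul_of_nonneg_right h3 (by positivity)
        _ = ((ε/2) * N)^2 := by ring
    calc Real.sqrt (((N:ℝ)/J) * (Vsum x N J / J)) ≤ Real.sqrt (((ε/2) * N)^2) :=
          Real.sqrt_le_sqrt harg
      _ = (ε/2) * N := Real.sqrt_sq (by positivity)
  -- size of the cell interval
  have hsize : (b - a) * N - 2 ≤ ((hi - lo : ℕ) : ℝ) := by
    rcases le_total lo hi with hcase | hcase
    · have : ((hi - lo : ℕ) : ℝ) = (hi:ℝ) - lo := by
        push_cast [hcase]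
        ring
      rw [this]
      linarith
    · have h0 : hi - lo = 0 := by omega
      rw [h0]
      have hcc : (hi:ℝ) ≤ lo := by exact_mod_cast hcase
      push_cast
      linarith
  have hεN : (2:ℝ) + 2*(J:ℝ) ≤ (ε/2) * N := by exact_mod_cast hN3
  calc (b - a - ε) * N = (b-a)*N - 2 - 2*(J:ℝ) - (ε/2)*N + (2 + 2*J - (ε/2)*N) := by ring
    _ ≤ (b-a)*N - 2 - 2*(J:ℝ) - (ε/2)*N := by linarith
    _ ≤ ((hi - lo : ℕ) : ℝ) - 2*J - Real.sqrt (((N:ℝ)/J) * (Vsum x N J / J)) := by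
        have := hsqrt
        linarith
    _ ≤ (((Finset.Icc 1 N).filter
          (fun n => lo ≤ tcell x N n ∧ tcell x N n < hi)).card : ℝ) := hmain
    _ ≤ _ := hsubset

lemma partition (x : ℕ → ℝ) {a b : ℝ} (ha : 0 ≤ a) (hab : a ≤ b) (hb : b ≤ 1) (N : ℕ) :
    ((Finset.Icc 1 N).filter (fun n => 0 ≤ Int.fract (x n) ∧ Int.fract (x n) < a)).card
    + ((Finset.Icc 1 N).filter (fun n => a ≤ Int.fract (x n) ∧ Int.fract (x n) < b)).card
    + ((Finset.Icc 1 N).filter (fun n => b ≤ Int.fract (x n) ∧ Int.fract (x n) < 1)).card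
    = N := by
  classical
  have key : ∀ n ∈ Finset.Icc 1 N,
      ((if 0 ≤ Int.fract (x n) ∧ Int.fract (x n) < a then 1 else 0)
      + (if a ≤ Int.fract (x n) ∧ Int.fract (x n) < b then 1 else 0)
      + (if b ≤ Int.fract (x n) ∧ Int.fract (x n) < 1 then 1 else 0) : ℕ) = 1 := by
    intro n _
    have h0 : 0 ≤ Int.fract (x n) := Int.fract_nonneg (x n)
    have h1 : Int.fract (x n) < 1 := Int.fract_lt_one (x n)
    rcases lt_or_ge (Int.fract (x n)) a with hA | hA
    · rw [if_pos ⟨h0, hA⟩, if_neg (fun hh => absurd hh.1 (by linarith)),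
        if_neg (fun hh => absurd hh.1 (by linarith))]
    · rcases lt_or_ge (Int.fract (x n)) b with hB | hB
      · rw [if_neg (fun hh => absurd hh.2 (by linarith)), if_pos ⟨hA, hB⟩,
          if_neg (fun hh => absurd hh.1 (by linarith))]
      · rw [if_neg (fun hh => absurd hh.2 (by linarith)),
          if_neg (fun hh => absurd hh.2 (by linarith)), if_pos ⟨hB, h1⟩]
  rw [Finset.card_filter, Finset.card_filter, Finset.card_filter,
    ← Finset.sum_add_distrib, ← Finset.sum_add_distrib,
    Finset.sum_congr rfl key, Finset.sum_const, Nat.card_Icc, smul_eq_mul]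
  omega

end PPCaux

/-- equidistribution on the torus: for every interval `[a,b) ⊆ [0,1)`,
the proportion of the first `N` points landing in it tends to `b - a`. -/
def Equidistributed (x : ℕ → ℝ) : Prop :=
  ∀ a b : ℝ, 0 ≤ a → a ≤ b → b ≤ 1 →
    Tendsto (fun N : ℕ =>
      (((Finset.Icc 1 N).filter
        (fun n => a ≤ Int.fract (x n) ∧ Int.fract (x n) < b)).card : ℝ) / N)
      atTop (nhds (b - a))

/-- Poissonian pair correlation implies equidistribution. -/
theorem poissonian_pair_correlation_implies_equidistribution (x : ℕ → ℝ)
    (h : ∀ s : ℝ, 0 < s →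
      Tendsto (fun N : ℕ => (pairCount x N (s / N) : ℝ) / N) atTop (nhds (2 * s))) :
    Equidistributed x := by
  intro a b ha hab hb
  rw [Metric.tendsto_atTop]
  intro ε hε
  have hε4 : 0 < ε / 4 := by linarith
  have h1 := PPCaux.cnt_lower x h a b ha hab hb (ε/4) hε4
  have h2 := PPCaux.cnt_lower x h 0 a le_rfl ha (le_trans hab hb) (ε/4) hε4
  have h3 := PPCaux.cnt_lower x h b 1 (le_trans ha hab) hb le_rfl (ε/4) hε4
  have hcomb := ((h1.and h2).and (h3.and (eventually_ge_atTop 1)))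
  rw [eventually_atTop] at hcomb
  obtain ⟨N₀, hN₀⟩ := hcomb
  refine ⟨N₀, fun N hN => ?_⟩
  obtain ⟨⟨hB, hA⟩, hC, hN1⟩ := hN₀ N hN
  have hNR : (0:ℝ) < N := by exact_mod_cast (by omega : 0 < N)
  set A := ((Finset.Icc 1 N).filter
      (fun n => 0 ≤ Int.fract (x n) ∧ Int.fract (x n) < a)).card with hAdef
  set B := ((Finset.Icc 1 N).filter
      (fun n => a ≤ Int.fract (x n) ∧ Int.fract (x n) < b)).card with hBdef
  set C := ((Finset.Icc 1 N).filter
      (fun n => b ≤ Int.fract (x n) ∧ Int.fract (x n) < 1)).card with hCdef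
  have hpart : A + B + C = N := PPCaux.partition x ha hab hb N
  have hpartR : (A:ℝ) + B + C = N := by exact_mod_cast hpart
  have hBub : (B:ℝ) ≤ (b - a + ε/2) * N := by
    have e2 : (0 - 0 - ε/4) * N ≤ (A:ℝ) := by
      calc (0 - 0 - ε/4) * N ≤ (a - 0 - ε/4) * N := by nlinarith
        _ ≤ (A:ℝ) := hA
    have e3 : (1 - b - ε/4) * N ≤ (C:ℝ) := hC
    have e2' : (a - 0 - ε/4) * N ≤ (A:ℝ) := hA
    nlinarith
  have hBlb : (b - a - ε/4) * N ≤ (B:ℝ) := hB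
  rw [Real.dist_eq, abs_lt]
  constructor
  · have hd : (b - a - ε/4) ≤ (B:ℝ)/N := by
      rw [le_div_iff₀ hNR]
      linarith
    linarith
  · have : (B:ℝ)/N ≤ b - a + ε/2 := by
      rw [div_le_iff₀ hNR]
      linarith
    linarith
end
end

section
/- Let (y_n) be the sequence (x_1, -x_1, x_2, -x_2, ...) where the x_n are i.i.d. uniform on T. Then for every even N, #{1 ≤ m,n,k,l ≤ N with {m,n} ≠ {k,l} as multisets : y_m + y_n - y_k - y_l = 0} ≥ N²/4 - N/2, and consequently (y_n) does not exhibit Poissonian correlation of four-fold differences. -/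
open Filter
open scoped Classical BigOperators

noncomputable section

/-- number of quadruples `1 ≤ m,n,k,l ≤ N` with multisets `{m,n} ≠ {k,l}` and
`‖y_m + y_n - y_k - y_l‖ ≤ ε`. -/
def fourCount (y : ℕ → ℝ) (N : ℕ) (ε : ℝ) : ℕ :=
  ((((Finset.Icc 1 N ×ˢ Finset.Icc 1 N) ×ˢ (Finset.Icc 1 N ×ˢ Finset.Icc 1 N))).filter
    (fun p => ({p.1.1, p.1.2} : Multiset ℕ) ≠ ({p.2.1, p.2.2} : Multiset ℕ) ∧
      tdist (y p.1.1 + y p.1.2 - y p.2.1 - y p.2.2) ≤ ε)).card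

/-- number of quadruples with multisets `{m,n} ≠ {k,l}` and `y_m + y_n - y_k - y_l = 0`
on the torus. -/
def fourCountZero (y : ℕ → ℝ) (N : ℕ) : ℕ :=
  ((((Finset.Icc 1 N ×ˢ Finset.Icc 1 N) ×ˢ (Finset.Icc 1 N ×ˢ Finset.Icc 1 N))).filter
    (fun p => ({p.1.1, p.1.2} : Multiset ℕ) ≠ ({p.2.1, p.2.2} : Multiset ℕ) ∧
      tdist (y p.1.1 + y p.1.2 - y p.2.1 - y p.2.2) = 0)).card

/-- the sequence `(x_1, -x_1, x_2, -x_2, …)` (1-indexed). -/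
def altSeq (x : ℕ → ℝ) : ℕ → ℝ := fun n => if n % 2 = 1 then x ((n + 1) / 2) else -x (n / 2)

lemma altSeq_odd (x : ℕ → ℝ) (a : ℕ) (ha : 1 ≤ a) : altSeq x (2*a - 1) = x a := by
  have h1 : (2*a - 1) % 2 = 1 := by omega
  have h2 : (2*a - 1 + 1)/2 = a := by omega
  simp [altSeq, h1, h2]

lemma altSeq_even (x : ℕ → ℝ) (a : ℕ) : altSeq x (2*a) = -x a := by
  have h1 : (2*a) % 2 = 0 := by omega
  have h2 : (2*a)/2 = a := by omega
  simp [altSeq, h1, h2]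

lemma tdist_zero : tdist 0 = 0 := by simp [tdist]

lemma fourCountZero_le (y : ℕ → ℝ) (N : ℕ) (ε : ℝ) (hε : 0 ≤ ε) :
    fourCountZero y N ≤ fourCount y N ε := by
  apply Finset.card_le_card
  intro p hp
  simp only [Finset.mem_filter] at hp ⊢
  exact ⟨hp.1, hp.2.1, hp.2.2 ▸ hε⟩

lemma lower_bound (x : ℕ → ℝ) (N : ℕ) (hN : 2 ≤ N) (he : N % 2 = 0) :
    (N : ℝ) ^ 2 / 4 - (N : ℝ) / 2 ≤ (fourCountZero (altSeq x) N : ℝ) := by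
  set M := N / 2 with hM
  have hNM : N = 2 * M := by omega
  have hM1 : 1 ≤ M := by omega
  have hcard : (Finset.Icc 1 M).offDiag.card ≤ fourCountZero (altSeq x) N := by
    apply Finset.card_le_card_of_injOn
      (fun p => ((2*p.1 - 1, 2*p.1), (2*p.2 - 1, 2*p.2)))
    · intro p hp
      rw [Finset.mem_coe, Finset.mem_offDiag] at hp
      obtain ⟨hp1, hp2, hne⟩ := hp
      rw [Finset.mem_Icc] at hp1 hp2
      simp only [Finset.mem_coe, Finset.mem_filter, Finset.mem_product, Finset.mem_Icc]
      refine ⟨⟨⟨⟨by omega, by omega⟩, ⟨by omega, by omega⟩⟩, ⟨by omega, by omega⟩, ⟨by omega, by omega⟩⟩, ?_, ?_⟩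
      · intro h
        have : (2*p.1) ∈ ({2*p.2 - 1, 2*p.2} : Multiset ℕ) := by
          rw [← h]; simp
        simp only [Multiset.insert_eq_cons, Multiset.mem_cons, Multiset.mem_singleton] at this
        omega
      · rw [altSeq_odd x p.1 (by omega), altSeq_even x p.1,
          altSeq_odd x p.2 (by omega), altSeq_even x p.2]
        have : x p.1 + -x p.1 - x p.2 - -x p.2 = 0 := by ring
        rw [this, tdist_zero]
    · intro p hp q hq h
      simp only [Prod.mk.injEq] at h
      have := h.1.2
      have := h.2.2
      exact Prod.ext (by omega) (by omega)
  have hod : (Finset.Icc 1 M).offDiag.card = M * M - M := by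
    rw [Finset.offDiag_card, Nat.card_Icc]
    simp
  calc (N : ℝ) ^ 2 / 4 - (N : ℝ) / 2 = (M : ℝ) * M - M := by
        rw [hNM]; push_cast; ring
    _ ≤ ((M * M - M : ℕ) : ℝ) := by
        rw [Nat.cast_sub (Nat.le_mul_of_pos_left M hM1)]
        push_cast; ring_nf; rfl
    _ ≤ (fourCountZero (altSeq x) N : ℝ) := by
        exact_mod_cast hod ▸ hcard

/-- For the sequence `(x_1, -x_1, x_2, -x_2, …)`, the number of nontrivial vanishing
four-fold differences among the first `N` (even) terms is at least `N²/4 - N/2`; consequently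
the sequence does not exhibit Poissonian correlation of four-fold differences. -/
theorem alternating_sequence_not_fourfold_poissonian (x : ℕ → ℝ) :
    (∀ N : ℕ, 2 ≤ N → N % 2 = 0 →
      (N : ℝ) ^ 2 / 4 - (N : ℝ) / 2 ≤ (fourCountZero (altSeq x) N : ℝ)) ∧
    ¬ (∀ s : ℝ, 0 < s →
      Tendsto (fun N : ℕ => (fourCount (altSeq x) N (s / (N : ℝ) ^ 2) : ℝ) / (N : ℝ) ^ 2)
        atTop (nhds (2 * s))) := by
  constructor
  · exact fun N hN he => lower_bound x N hN he
  · intro h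
    have h1 := h (1/16) (by norm_num)
    have hlt : ∀ᶠ N in atTop,
        (fourCount (altSeq x) N ((1/16) / (N : ℝ) ^ 2) : ℝ) / (N : ℝ) ^ 2 < 3/16 := by
      have : (2 : ℝ) * (1/16) < 3/16 := by norm_num
      exact h1.eventually_lt_const this
    obtain ⟨N₀, hN₀⟩ := eventually_atTop.mp hlt
    set N := 2 * N₀ + 8 with hNdef
    have hNe : N % 2 = 0 := by omega
    have hN2 : 2 ≤ N := by omega
    have hNpos : (0:ℝ) < (N : ℝ) ^ 2 := by positivity
    have hlow := lower_bound x N hN2 hNe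
    have hmono : (fourCountZero (altSeq x) N : ℝ) ≤ (fourCount (altSeq x) N ((1/16) / (N : ℝ) ^ 2) : ℝ) := by
      exact_mod_cast fourCountZero_le (altSeq x) N _ (by positivity)
    have hratio := hN₀ N (by omega)
    have hN8 : (8 : ℝ) ≤ (N : ℝ) := by
      have : (8 : ℕ) ≤ N := by omega
      exact_mod_cast this
    have key : (3:ℝ)/16 ≤ ((N : ℝ) ^ 2 / 4 - (N : ℝ) / 2) / (N : ℝ) ^ 2 := by
      rw [le_div_iff₀ hNpos]
      nlinarith
    have : (3:ℝ)/16 ≤ (fourCount (altSeq x) N ((1/16) / (N : ℝ) ^ 2) : ℝ) / (N : ℝ) ^ 2 := by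
      calc (3:ℝ)/16 ≤ ((N : ℝ) ^ 2 / 4 - (N : ℝ) / 2) / (N : ℝ) ^ 2 := key
        _ ≤ (fourCount (altSeq x) N ((1/16) / (N : ℝ) ^ 2) : ℝ) / (N : ℝ) ^ 2 := by
            gcongr
            exact le_trans hlow hmono
    linarith
end
end

section
/- Let (a_n) be a strictly increasing sequence of positive integers with (1/N²)·E(a_1,...,a_N) → ∞ as N → ∞, where E is the additive energy. Then for every real α and every s > 0, limsup_{N→∞} (1/N²)#{1 ≤ m,n,k,l ≤ N, {m,n} ≠ {k,l} : ‖a_mα + a_nα - a_kα - a_lα‖ ≤ s/N²} = ∞; in particular ({a_nα}) does not exhibit four-fold Poissonian correlation for any α. -/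
open Filter
open scoped Classical BigOperators

noncomputable section

/-- additive energy of `a_1, …, a_N`. -/
def addEnergy (a : ℕ → ℕ) (N : ℕ) : ℕ :=
  ((((Finset.Icc 1 N ×ˢ Finset.Icc 1 N) ×ˢ (Finset.Icc 1 N ×ˢ Finset.Icc 1 N))).filter
    (fun p => (a p.1.1 : ℤ) - (a p.1.2 : ℤ) = (a p.2.1 : ℤ) - (a p.2.2 : ℤ))).card

lemma multiset_pair_eq_pair {α : Type*} {a b c d : α} :
    ({a, b} : Multiset α) = {c, d} ↔ (a = c ∧ b = d) ∨ (a = d ∧ b = c) := by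
  constructor
  · intro h
    have ha : a ∈ ({c, d} : Multiset α) := h ▸ Multiset.mem_cons_self a {b}
    rcases Multiset.mem_cons.1 ha with rfl | ha
    · left
      refine ⟨rfl, ?_⟩
      have := (Multiset.cons_inj_right a).1 h
      simpa using this
    · right
      have ha' : a = d := by simpa using ha
      subst ha'
      refine ⟨rfl, ?_⟩
      rw [Multiset.pair_comm c a] at h
      have := (Multiset.cons_inj_right a).1 h
      simpa using this
  · rintro (⟨rfl, rfl⟩ | ⟨rfl, rfl⟩)
    · rfl
    · exact Multiset.pair_comm a b

lemma energy_le_fourCount (a : ℕ → ℕ) (α : ℝ) (N : ℕ) (ε : ℝ) (hε : 0 ≤ ε) :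
    addEnergy a N ≤ fourCount (fun n => (a n : ℝ) * α) N ε + 2 * N ^ 2 := by
  classical
  set S : Finset (ℕ × ℕ) := Finset.Icc 1 N ×ˢ Finset.Icc 1 N with hS
  set y : ℕ → ℝ := fun n => (a n : ℝ) * α with hy
  set T : Finset ((ℕ × ℕ) × ℕ × ℕ) :=
    (S ×ˢ S).filter (fun p => (a p.1.1 : ℤ) - (a p.1.2 : ℤ) = (a p.2.1 : ℤ) - (a p.2.2 : ℤ))
    with hT
  set F : Finset ((ℕ × ℕ) × ℕ × ℕ) :=
    (S ×ˢ S).filter (fun p => ({p.1.1, p.1.2} : Multiset ℕ) ≠ ({p.2.1, p.2.2} : Multiset ℕ) ∧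
      tdist (y p.1.1 + y p.1.2 - y p.2.1 - y p.2.2) ≤ ε) with hF
  set D : Finset ((ℕ × ℕ) × ℕ × ℕ) :=
    (S.image fun q => (q, q)) ∪ (S.image fun q => (q, (q.2, q.1))) with hD
  have hf : Function.Injective (fun p : (ℕ × ℕ) × ℕ × ℕ => ((p.1.1, p.2.2), (p.2.1, p.1.2))) := by
    intro p q h
    simp only [Prod.mk.injEq] at h
    obtain ⟨⟨h1, h2⟩, h3, h4⟩ := h
    exact Prod.ext (Prod.ext h1 h4) (Prod.ext h3 h2)
  have himg : T.image (fun p => ((p.1.1, p.2.2), (p.2.1, p.1.2))) ⊆ F ∪ D := by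
    intro q hq
    simp only [Finset.mem_image] at hq
    obtain ⟨p, hp, rfl⟩ := hq
    simp only [hT, Finset.mem_filter, Finset.mem_product, hS, Finset.mem_product] at hp
    obtain ⟨⟨⟨hm, hn⟩, hk, hl⟩, heq⟩ := hp
    have h1 : (a p.1.1 : ℝ) - (a p.1.2 : ℝ) = (a p.2.1 : ℝ) - (a p.2.2 : ℝ) := by
      exact_mod_cast heq
    have hzero : y p.1.1 + y p.2.2 - y p.2.1 - y p.1.2 = 0 := by
      simp only [hy]
      linear_combination α * h1
    by_cases hms : ({p.1.1, p.2.2} : Multiset ℕ) = ({p.2.1, p.1.2} : Multiset ℕ)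
    · refine Finset.mem_union_right _ ?_
      rcases multiset_pair_eq_pair.1 hms with ⟨h1, h2⟩ | ⟨h1, h2⟩
      · exact Finset.mem_union_left _ (Finset.mem_image.2 ⟨(p.1.1, p.2.2),
          by simp [hS, Finset.mem_product, hm, hl], by simp [Prod.ext_iff, h1, h2]⟩)
      · exact Finset.mem_union_right _ (Finset.mem_image.2 ⟨(p.1.1, p.2.2),
          by simp [hS, Finset.mem_product, hm, hl], by simp [Prod.ext_iff, h1, h2]⟩)
    · refine Finset.mem_union_left _ (Finset.mem_filter.2 ⟨?_, hms, ?_⟩)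
      · simp [hS, Finset.mem_product, hm, hn, hk, hl]
      · simp only
        rw [hzero, tdist_zero]
        exact hε
  have hcard : T.card ≤ F.card + D.card := by
    calc T.card = (T.image (fun p => ((p.1.1, p.2.2), (p.2.1, p.1.2)))).card :=
          (Finset.card_image_of_injective T hf).symm
      _ ≤ (F ∪ D).card := Finset.card_le_card himg
      _ ≤ F.card + D.card := Finset.card_union_le F D
  have hDcard : D.card ≤ 2 * N ^ 2 := by
    have hScard : S.card = N ^ 2 := by
      simp [hS, Nat.card_Icc, sq]
    calc D.card ≤ (S.image fun q => (q, q)).card + (S.image fun q => (q, (q.2, q.1))).card :=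
          Finset.card_union_le _ _
      _ ≤ S.card + S.card := add_le_add (Finset.card_image_le) (Finset.card_image_le)
      _ = 2 * N ^ 2 := by rw [hScard]; ring
  have : addEnergy a N = T.card := rfl
  have hFc : F.card = fourCount y N ε := rfl
  omega
  
/-- If `E(a_1,…,a_N)/N² → ∞` then for every `α` and every `s > 0` the normalized four-fold
correlation counts have limsup `∞`; in particular `({a_n α})` is not four-fold Poissonian. -/
theorem unbounded_additive_energy_fourfold_counts_blow_up
    (a : ℕ → ℕ) (hpos : ∀ n, 1 ≤ a n) (hmono : StrictMono a)
    (hE : Tendsto (fun N : ℕ => (addEnergy a N : ℝ) / (N : ℝ) ^ 2) atTop atTop) :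
    (∀ α : ℝ, ∀ s : ℝ, 0 < s →
      limsup (fun N : ℕ =>
          (((fourCount (fun n => (a n : ℝ) * α) N (s / (N : ℝ) ^ 2) : ℝ) / (N : ℝ) ^ 2 : ℝ) : EReal))
        atTop = ⊤) ∧
    (∀ α : ℝ, ¬ (∀ s : ℝ, 0 < s →
      Tendsto (fun N : ℕ =>
          (fourCount (fun n => (a n : ℝ) * α) N (s / (N : ℝ) ^ 2) : ℝ) / (N : ℝ) ^ 2)
        atTop (nhds (2 * s)))) := by
  have key : ∀ (α : ℝ) (s : ℝ), 0 < s →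
      Tendsto (fun N : ℕ =>
        (fourCount (fun n => (a n : ℝ) * α) N (s / (N : ℝ) ^ 2) : ℝ) / (N : ℝ) ^ 2)
        atTop atTop := by
    intro α s hs
    have hlow : Tendsto (fun N : ℕ => (addEnergy a N : ℝ) / (N : ℝ) ^ 2 + (-2)) atTop atTop :=
      tendsto_atTop_add_const_right atTop (-2) hE
    refine tendsto_atTop_mono' atTop ?_ hlow
    filter_upwards [eventually_ge_atTop 1] with N hN
    have hN0 : (0 : ℝ) < (N : ℝ) ^ 2 := by positivity
    have hε : (0 : ℝ) ≤ s / (N : ℝ) ^ 2 := le_of_lt (div_pos hs hN0)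
    have hle := energy_le_fourCount a α N (s / (N : ℝ) ^ 2) hε
    have hle' : (addEnergy a N : ℝ) ≤
        (fourCount (fun n => (a n : ℝ) * α) N (s / (N : ℝ) ^ 2) : ℝ) + 2 * (N : ℝ) ^ 2 := by
      have := hle
      push_cast
      exact_mod_cast this
    rw [div_add' _ _ _ (ne_of_gt hN0)] at *
    rw [div_le_div_iff₀ hN0 hN0]
    nlinarith [hle']
  constructor
  · intro α s hs
    have h1 : Tendsto (fun N : ℕ =>
        (((fourCount (fun n => (a n : ℝ) * α) N (s / (N : ℝ) ^ 2) : ℝ) / (N : ℝ) ^ 2 : ℝ) : EReal))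
        atTop (nhds ⊤) := by
      rw [EReal.tendsto_nhds_top_iff_real]
      intro x
      filter_upwards [(key α s hs).eventually_gt_atTop x] with N hN
      exact_mod_cast EReal.coe_lt_coe_iff.2 hN
    exact h1.limsup_eq
  · intro α h
    exact not_tendsto_nhds_of_tendsto_atTop (key α 1 one_pos) (2 * 1) (h 1 one_pos)
end
end
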